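/- Let 0 ≤ ρ ≤ 1, let n > k ≥ 1 be integers, and let P be a random k×(n-k) matrix over F₂ with i.i.d. Bernoulli(ρ) entries. For 1 ≤ i ≤ k and 0 ≤ j ≤ n-k, the expected number of vectors u ∈ F₂^k with Hamming weight W_H(u) = i and W_H(uP) = j equals A_{ij} = C(k,i) · C(n-k,j) · ρ_i^j (1-ρ_i)^{n-k-j}, where ρ_i = (1-(1-2ρ)^i)/2 and C(·,·) denotes the binomial coefficient. -/

import Mathlib

open Matrix

open Finset in
lemma zmod2_sum (f : ZMod 2 → ℝ) : ∑ b : ZMod 2, f b = f 0 + f 1 := by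
  rw [show (Finset.univ : Finset (ZMod 2)) = {0, 1} by decide]
  rw [Finset.sum_insert (by decide), Finset.sum_singleton]

/-- The key binomial identity. -/
lemma binom_sum {C : Type*} [Fintype C] [DecidableEq C] (m j : ℕ) (f : C → ℝ)
    (pred : C → Prop) [DecidablePred pred] :
    ∑ g : Fin m → C, (∏ b, f (g b)) *
      (if (Finset.univ.filter fun b => pred (g b)).card = j then (1:ℝ) else 0)
    = (m.choose j : ℝ) * (∑ c ∈ Finset.univ.filter pred, f c) ^ j *
        (∑ c ∈ Finset.univ.filter (fun c => ¬ pred c), f c) ^ (m - j) := by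
  set p := ∑ c ∈ Finset.univ.filter pred, f c with hp
  set q := ∑ c ∈ Finset.univ.filter (fun c => ¬ pred c), f c with hq
  rw [← Finset.sum_fiberwise Finset.univ
      (fun g : Fin m → C => Finset.univ.filter fun b => pred (g b))
      (fun g => (∏ b, f (g b)) *
        (if (Finset.univ.filter fun b => pred (g b)).card = j then (1:ℝ) else 0))]
  have fib : ∀ S : Finset (Fin m),
      ∑ g ∈ Finset.univ.filter (fun g : Fin m → C =>
          (Finset.univ.filter fun b => pred (g b)) = S), (∏ b, f (g b))
        = p ^ S.card * q ^ (m - S.card) := by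
    intro S
    have hset : Finset.univ.filter (fun g : Fin m → C =>
        (Finset.univ.filter fun b => pred (g b)) = S)
        = Fintype.piFinset (fun b => if b ∈ S then Finset.univ.filter pred
            else Finset.univ.filter (fun c => ¬ pred c)) := by
      ext g
      simp only [Finset.mem_filter, Finset.mem_univ, true_and, Fintype.mem_piFinset,
        Finset.ext_iff]
      constructor
      · intro h b
        by_cases hb : b ∈ S
        · simpa [hb] using (h b).mpr hb
        · simpa [hb] using fun hpb => hb ((h b).mp hpb)
      · intro h b
        by_cases hb : b ∈ S <;> [skip; skip] <;>
          · have := h b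
            simp [hb] at this
            simp [hb, this]
    rw [hset, ← Finset.prod_univ_sum]
    have : ∀ b : Fin m, (∑ c ∈ (if b ∈ S then Finset.univ.filter pred
        else Finset.univ.filter (fun c => ¬ pred c)), f c) = if b ∈ S then p else q := by
      intro b; by_cases hb : b ∈ S <;> simp [hb, hp, hq]
    rw [Finset.prod_congr rfl (fun b _ => this b), Finset.prod_ite,
      Finset.prod_const, Finset.prod_const]
    congr 1
    · congr 1; simp
    · congr 1
      rw [Finset.filter_not, Finset.filter_mem_eq_inter, Finset.univ_inter,
        Finset.card_sdiff_of_subset (Finset.subset_univ S), Finset.card_univ, Fintype.card_fin]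
  calc ∑ S : Finset (Fin m), ∑ g ∈ Finset.univ.filter (fun g : Fin m → C =>
          (Finset.univ.filter fun b => pred (g b)) = S),
          (∏ b, f (g b)) * (if (Finset.univ.filter fun b => pred (g b)).card = j then (1:ℝ) else 0)
      = ∑ S : Finset (Fin m), (if S.card = j then (1:ℝ) else 0) * (p ^ S.card * q ^ (m - S.card)) := by
        refine Finset.sum_congr rfl fun S _ => ?_
        rw [← fib S, Finset.mul_sum]
        refine Finset.sum_congr rfl fun g hg => ?_
        rw [Finset.mem_filter] at hg
        rw [hg.2, mul_comm]
    _ = ∑ S ∈ Finset.univ.filter (fun S : Finset (Fin m) => S.card = j),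
          (p ^ S.card * q ^ (m - S.card)) := by
        rw [Finset.sum_filter]
        refine Finset.sum_congr rfl fun S _ => ?_
        by_cases h : S.card = j <;> simp [h]
    _ = ∑ _S ∈ Finset.univ.filter (fun S : Finset (Fin m) => S.card = j),
          (p ^ j * q ^ (m - j)) :=
        Finset.sum_congr rfl (fun S hS => by rw [(Finset.mem_filter.mp hS).2])
    _ = (m.choose j : ℝ) * p ^ j * q ^ (m - j) := by
        rw [Finset.sum_const, ← Finset.powerset_univ, ← Finset.powersetCard_eq_filter,
          Finset.card_powersetCard, Finset.card_univ, Fintype.card_fin]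
        push_cast
        ring

noncomputable def chi (x : ZMod 2) : ℝ := if x = 1 then -1 else 1

lemma chi_add (x y : ZMod 2) : chi (x + y) = chi x * chi y := by
  rcases (by decide : ∀ x : ZMod 2, x = 0 ∨ x = 1) x with rfl | rfl <;> rcases (by decide : ∀ x : ZMod 2, x = 0 ∨ x = 1) y with rfl | rfl <;> simp [chi] <;> norm_num [show ((1:ZMod 2)+1 = 0) by decide]

lemma chi_sum {k : ℕ} (s : Finset (Fin k)) (v : Fin k → ZMod 2) :
    chi (∑ a ∈ s, v a) = ∏ a ∈ s, chi (v a) := by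
  induction s using Finset.cons_induction with
  | empty => simp [chi]
  | cons a s ha ih => rw [Finset.sum_cons, Finset.prod_cons, chi_add, ih]

lemma col_sum_one (ρ : ℝ) (k : ℕ) :
    ∑ c : Fin k → ZMod 2, (∏ a, (if c a = 1 then ρ else 1 - ρ)) = 1 := by
  have key := Finset.prod_univ_sum (fun _ : Fin k => (Finset.univ : Finset (ZMod 2)))
    (fun _ b => if b = 1 then ρ else 1 - ρ)
  rw [Fintype.piFinset_univ] at key
  rw [← key]
  have : ∀ a : Fin k, (∑ b : ZMod 2, (if b = 1 then ρ else 1 - ρ)) = 1 := by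
    intro a; rw [zmod2_sum]; norm_num [show ((0:ZMod 2) ≠ 1) by decide]
  rw [Finset.prod_congr rfl (fun a _ => this a), Finset.prod_const_one]

lemma col_char (ρ : ℝ) (k : ℕ) (u : Fin k → ZMod 2) :
    ∑ c : Fin k → ZMod 2, (∏ a, (if c a = 1 then ρ else 1 - ρ)) * chi (∑ a, u a * c a)
      = (1 - 2 * ρ) ^ hammingNorm u := by
  have step1 : ∀ c : Fin k → ZMod 2,
      (∏ a, (if c a = 1 then ρ else 1 - ρ)) * chi (∑ a, u a * c a)
      = ∏ a, ((if c a = 1 then ρ else 1 - ρ) * chi (u a * c a)) := by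
    intro c
    rw [chi_sum, ← Finset.prod_mul_distrib]
  simp only [step1]
  have key := Finset.prod_univ_sum (fun _ : Fin k => (Finset.univ : Finset (ZMod 2)))
    (fun a b => (if b = 1 then ρ else 1 - ρ) * chi (u a * b))
  rw [Fintype.piFinset_univ] at key
  rw [← key]
  have inner : ∀ a : Fin k,
      (∑ b : ZMod 2, (if b = 1 then ρ else 1 - ρ) * chi (u a * b))
      = if u a ≠ 0 then 1 - 2 * ρ else 1 := by
    intro a
    rw [zmod2_sum]
    rcases (by decide : ∀ x : ZMod 2, x = 0 ∨ x = 1) (u a) with h | h <;>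
      rw [h] <;> simp [chi, show ((0:ZMod 2) ≠ 1) by decide] <;> ring
  rw [Finset.prod_congr rfl (fun a _ => inner a), Finset.prod_ite, Finset.prod_const,
    Finset.prod_const, one_pow, mul_one, hammingNorm]

lemma col_prob (ρ : ℝ) (k : ℕ) (u : Fin k → ZMod 2) :
    ∑ c ∈ Finset.univ.filter (fun c : Fin k → ZMod 2 => (∑ a, u a * c a) ≠ 0),
        (∏ a, (if c a = 1 then ρ else 1 - ρ))
      = (1 - (1 - 2 * ρ) ^ hammingNorm u) / 2 := by
  have ind : ∀ c : Fin k → ZMod 2,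
      (if (∑ a, u a * c a) ≠ 0 then (1:ℝ) else 0) = (1 - chi (∑ a, u a * c a)) / 2 := by
    intro c
    rcases (by decide : ∀ x : ZMod 2, x = 0 ∨ x = 1) (∑ a, u a * c a) with h | h <;>
      rw [h] <;> norm_num [chi]
  rw [Finset.sum_filter]
  have : ∀ c : Fin k → ZMod 2,
      (if (∑ a, u a * c a) ≠ 0 then (∏ a, (if c a = 1 then ρ else 1 - ρ)) else 0)
      = (∏ a, (if c a = 1 then ρ else 1 - ρ)) * ((1 - chi (∑ a, u a * c a)) / 2) := by
    intro c
    rw [← ind c]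
    by_cases h : (∑ a, u a * c a) ≠ 0 <;> simp [h]
  rw [Finset.sum_congr rfl (fun c _ => this c)]
  have expand : ∀ c : Fin k → ZMod 2,
      (∏ a, (if c a = 1 then ρ else 1 - ρ)) * ((1 - chi (∑ a, u a * c a)) / 2)
      = ((∏ a, (if c a = 1 then ρ else 1 - ρ))
        - (∏ a, (if c a = 1 then ρ else 1 - ρ)) * chi (∑ a, u a * c a)) / 2 := by
    intro c; ring
  rw [Finset.sum_congr rfl (fun c _ => expand c), ← Finset.sum_div, Finset.sum_sub_distrib,
    col_sum_one, col_char]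

lemma col_prob_not (ρ : ℝ) (k : ℕ) (u : Fin k → ZMod 2) :
    ∑ c ∈ Finset.univ.filter (fun c : Fin k → ZMod 2 => ¬ (∑ a, u a * c a) ≠ 0),
        (∏ a, (if c a = 1 then ρ else 1 - ρ))
      = 1 - (1 - (1 - 2 * ρ) ^ hammingNorm u) / 2 := by
  have := Finset.sum_filter_add_sum_filter_not Finset.univ
    (fun c : Fin k → ZMod 2 => (∑ a, u a * c a) ≠ 0)
    (fun c => (∏ a, (if c a = 1 then ρ else 1 - ρ)))
  rw [col_prob, col_sum_one] at this
  linarith [this]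


lemma count_wt (k i : ℕ) :
    ((Finset.univ.filter fun u : Fin k → ZMod 2 => hammingNorm u = i).card : ℝ)
      = (k.choose i : ℝ) := by
  have key := binom_sum (C := ZMod 2) k i (fun _ => (1:ℝ)) (fun c => c ≠ 0)
  have h1 : (∑ c ∈ (Finset.univ.filter fun c : ZMod 2 => c ≠ 0), (1:ℝ)) = 1 := by
    rw [show (Finset.univ.filter fun c : ZMod 2 => c ≠ 0) = {1} by decide]
    simp
  have h2 : (∑ c ∈ (Finset.univ.filter fun c : ZMod 2 => ¬ c ≠ 0), (1:ℝ)) = 1 := by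
    rw [show (Finset.univ.filter fun c : ZMod 2 => ¬ c ≠ 0) = {0} by decide]
    simp
  rw [h1, h2, one_pow, one_pow, mul_one, mul_one] at key
  rw [← key]
  simp only [Finset.prod_const_one, one_mul]
  rw [Finset.sum_boole]
  congr 1

def colEquiv (k m : ℕ) : (Fin m → Fin k → ZMod 2) ≃ Matrix (Fin k) (Fin m) (ZMod 2) :=
  (Equiv.piComm fun (_ : Fin m) (_ : Fin k) => ZMod 2).trans Matrix.of

lemma per_u (ρ : ℝ) (k m j : ℕ) (u : Fin k → ZMod 2) :
    ∑ P : Matrix (Fin k) (Fin m) (ZMod 2),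
      (∏ a : Fin k, ∏ b : Fin m, (if P a b = 1 then ρ else 1 - ρ)) *
        (if hammingNorm (Matrix.vecMul u P) = j then (1:ℝ) else 0)
    = (m.choose j : ℝ) * ((1 - (1 - 2 * ρ) ^ hammingNorm u) / 2) ^ j *
        (1 - (1 - (1 - 2 * ρ) ^ hammingNorm u) / 2) ^ (m - j) := by
  rw [← Fintype.sum_equiv (colEquiv k m)
    (fun g : Fin m → Fin k → ZMod 2 =>
      (∏ b : Fin m, ∏ a : Fin k, (if g b a = 1 then ρ else 1 - ρ)) *
        (if (Finset.univ.filter fun b : Fin m => (∑ a : Fin k, u a * g b a) ≠ 0).card = j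
          then (1:ℝ) else 0))
    _ (fun g => by
      have hP : ∀ a b, (colEquiv k m g) a b = g b a := fun a b => rfl
      have hμ : (∏ a : Fin k, ∏ b : Fin m, (if (colEquiv k m g) a b = 1 then ρ else 1 - ρ))
          = ∏ b : Fin m, ∏ a : Fin k, (if g b a = 1 then ρ else 1 - ρ) := by
        rw [Finset.prod_comm]
        simp only [hP]
      have hv : ∀ b : Fin m, Matrix.vecMul u (colEquiv k m g) b = ∑ a : Fin k, u a * g b a := by
        intro b
        simp [Matrix.vecMul, dotProduct, hP]
      have hN : hammingNorm (Matrix.vecMul u (colEquiv k m g))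
          = (Finset.univ.filter fun b : Fin m => (∑ a : Fin k, u a * g b a) ≠ 0).card := by
        simp only [hammingNorm, hv]
      rw [hμ, hN])]
  rw [binom_sum m j (fun c : Fin k → ZMod 2 => ∏ a, (if c a = 1 then ρ else 1 - ρ))
      (fun c => (∑ a, u a * c a) ≠ 0), col_prob, col_prob_not]

lemma main_lemma (ρ : ℝ) (k m i j : ℕ) :
    ∑ P : Matrix (Fin k) (Fin m) (ZMod 2),
      (∏ a : Fin k, ∏ b : Fin m, (if P a b = 1 then ρ else 1 - ρ)) *
        ((Finset.univ.filter (fun u : Fin k → ZMod 2 =>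
            hammingNorm u = i ∧ hammingNorm (Matrix.vecMul u P) = j)).card : ℝ)
    = (k.choose i : ℝ) * (m.choose j : ℝ) *
        ((1 - (1 - 2 * ρ) ^ i) / 2) ^ j *
        (1 - (1 - (1 - 2 * ρ) ^ i) / 2) ^ (m - j) := by
  simp only [Finset.card_filter, Nat.cast_sum, Nat.cast_ite, Nat.cast_one, Nat.cast_zero,
    Finset.mul_sum]
  rw [Finset.sum_comm]
  calc ∑ u : Fin k → ZMod 2, ∑ P : Matrix (Fin k) (Fin m) (ZMod 2),
        (∏ a : Fin k, ∏ b : Fin m, (if P a b = 1 then ρ else 1 - ρ)) *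
          (if hammingNorm u = i ∧ hammingNorm (Matrix.vecMul u P) = j then (1:ℝ) else 0)
      = ∑ u : Fin k → ZMod 2, (if hammingNorm u = i then
          ∑ P : Matrix (Fin k) (Fin m) (ZMod 2),
            (∏ a : Fin k, ∏ b : Fin m, (if P a b = 1 then ρ else 1 - ρ)) *
              (if hammingNorm (Matrix.vecMul u P) = j then (1:ℝ) else 0) else 0) := by
        refine Finset.sum_congr rfl fun u _ => ?_
        by_cases hA : hammingNorm u = i
        · rw [if_pos hA]
          refine Finset.sum_congr rfl fun P _ => ?_
          by_cases hB : hammingNorm (Matrix.vecMul u P) = j <;> simp [hA, hB]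
        · simp [hA]
    _ = ∑ u ∈ Finset.univ.filter (fun u : Fin k → ZMod 2 => hammingNorm u = i),
          ∑ P : Matrix (Fin k) (Fin m) (ZMod 2),
            (∏ a : Fin k, ∏ b : Fin m, (if P a b = 1 then ρ else 1 - ρ)) *
              (if hammingNorm (Matrix.vecMul u P) = j then (1:ℝ) else 0) := by
        rw [Finset.sum_filter]
    _ = ∑ _u ∈ Finset.univ.filter (fun u : Fin k → ZMod 2 => hammingNorm u = i),
          ((m.choose j : ℝ) * ((1 - (1 - 2 * ρ) ^ i) / 2) ^ j *
            (1 - (1 - (1 - 2 * ρ) ^ i) / 2) ^ (m - j)) := by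
        refine Finset.sum_congr rfl fun u hu => ?_
        rw [per_u, (Finset.mem_filter.mp hu).2]
    _ = (k.choose i : ℝ) * (m.choose j : ℝ) *
          ((1 - (1 - 2 * ρ) ^ i) / 2) ^ j *
          (1 - (1 - (1 - 2 * ρ) ^ i) / 2) ^ (m - j) := by
        rw [Finset.sum_const, nsmul_eq_mul, count_wt k i]
        ring


/-- Let `0 ≤ ρ ≤ 1`, `n > k ≥ 1`, and let `P` be a random `k×(n-k)` matrix
over `F₂` with i.i.d. Bernoulli(ρ) entries. For `1 ≤ i ≤ k` and `0 ≤ j ≤ n-k`, the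
expected number of `u ∈ F₂^k` with `W_H(u) = i` and `W_H(uP) = j` equals
`A_{ij} = C(k,i) C(n-k,j) ρ_i^j (1-ρ_i)^{n-k-j}` with `ρ_i = (1-(1-2ρ)^i)/2`.
The expectation is written as the sum over all matrices `P` of the product Bernoulli(ρ)
probability of `P` times the number of such vectors `u`. -/
theorem stmt_12 (ρ : ℝ) (hρ0 : 0 ≤ ρ) (hρ1 : ρ ≤ 1) (n k : ℕ) (hk : 1 ≤ k) (hkn : k < n)
    (i j : ℕ) (hi1 : 1 ≤ i) (hik : i ≤ k) (hj : j ≤ n - k) :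
    ∑ P : Matrix (Fin k) (Fin (n - k)) (ZMod 2),
      (∏ a : Fin k, ∏ b : Fin (n - k), (if P a b = 1 then ρ else 1 - ρ)) *
        ((Finset.univ.filter (fun u : Fin k → ZMod 2 =>
            hammingNorm u = i ∧ hammingNorm (Matrix.vecMul u P) = j)).card : ℝ)
    = (k.choose i : ℝ) * ((n - k).choose j : ℝ) *
        ((1 - (1 - 2 * ρ) ^ i) / 2) ^ j *
        (1 - (1 - (1 - 2 * ρ) ^ i) / 2) ^ (n - k - j) := by
  exact main_lemma ρ k (n - k) i j
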